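/- Let (G,P) be an EDP instance, let a ≠ b be vertices of G each of degree 1 whose unique neighbor is the same vertex c (so N(a) = N(b) = {c}), and suppose there is exactly one index i₀ whose terminal pair is {a,b} and that a and b occur in no terminal pair other than pair i₀. Then (G,P) is a YES-instance of EDP if and only if (G − {a,b}, P') is a YES-instance of EDP, where G − {a,b} deletes the vertices a and b and P' is P with the pair indexed by i₀ removed. -/

import Mathlib

/-- A solution to an instance `(G, P)` of the Edge Disjoint Paths problem:
a family of paths, one per terminal pair, that are pairwise edge-disjoint. -/
def EDPSolution {V ι : Type*} (G : SimpleGraph V) (P : ι → V × V)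
    (W : ∀ i : ι, G.Walk (P i).1 (P i).2) : Prop :=
  (∀ i, (W i).IsPath) ∧
    ∀ i j, i ≠ j → ∀ e ∈ (W i).edges, e ∉ (W j).edges

/-- `(G, P)` is a YES-instance of the Edge Disjoint Paths problem. -/
def EDPYes {V ι : Type*} (G : SimpleGraph V) (P : ι → V × V) : Prop :=
  ∃ W : ∀ i : ι, G.Walk (P i).1 (P i).2, EDPSolution G P W

/-- A path with both endpoints different from a leaf `a` avoids `a`. -/
lemma avoid_leaf {V : Type*} {G : SimpleGraph V} {a c : V}
    (hNa : ∀ x, G.Adj a x → x = c) :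
    ∀ {u v : V} (p : G.Walk u v), p.IsPath → u ≠ a → v ≠ a → a ∉ p.support := by
  intro u v p
  induction p with
  | nil => intro _ hu _; simp [Ne.symm hu]
  | @cons u w v h q ih =>
    intro hp hu hv
    rw [SimpleGraph.Walk.support_cons, List.mem_cons]
    push_neg
    refine ⟨Ne.symm hu, ?_⟩
    rcases eq_or_ne w a with hw | hw
    · subst hw
      have hu' : u = c := hNa u h.symm
      cases q with
      | nil => exact absurd rfl (Ne.symm hv)
      | @cons _ y _ h' q' =>
        have hy : y = c := hNa y h'
        have : u ∈ (SimpleGraph.Walk.cons h' q').support := by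
          rw [SimpleGraph.Walk.support_cons, List.mem_cons]
          right
          rw [hu', ← hy]
          exact q'.start_mem_support
        exact absurd this ((SimpleGraph.Walk.cons_isPath_iff _ _).mp hp).2
    · exact ih ((SimpleGraph.Walk.cons_isPath_iff _ _).mp hp).1 hw hv

/-- Lift a walk whose support lies in `s` to the induced subgraph on `s`. -/
def liftWalk {V : Type*} {G : SimpleGraph V} {s : Set V} :
    ∀ {u v : V} (p : G.Walk u v) (h : ∀ x ∈ p.support, x ∈ s),
      (G.induce s).Walk ⟨u, h u p.start_mem_support⟩ ⟨v, h v p.end_mem_support⟩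
  | _, _, SimpleGraph.Walk.nil, _ => SimpleGraph.Walk.nil
  | _, _, SimpleGraph.Walk.cons hadj q, h =>
      SimpleGraph.Walk.cons (by exact hadj)
        (liftWalk q (fun x hx => h x (by simp [hx])))

lemma liftWalk_map {V : Type*} {G : SimpleGraph V} {s : Set V} :
    ∀ {u v : V} (p : G.Walk u v) (h : ∀ x ∈ p.support, x ∈ s),
      (liftWalk p h).map (SimpleGraph.Embedding.induce s).toHom = p
  | _, _, SimpleGraph.Walk.nil, _ => rfl
  | _, _, SimpleGraph.Walk.cons hadj q, h => by
      simp only [liftWalk, SimpleGraph.Walk.map_cons]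
      congr 1
      exact congrArg (SimpleGraph.Walk.cons hadj) (liftWalk_map q _)

lemma dite_of_pos {α : Sort*} {c : Prop} [Decidable c] {t : c → α} {e : ¬c → α}
    (Q : α → Prop) (hc : c) (h : Q (t hc)) : Q (dite c t e) := by
  rw [dif_pos hc]; exact h

lemma dite_of_neg {α : Sort*} {c : Prop} [Decidable c] {t : c → α} {e : ¬c → α}
    (Q : α → Prop) (hc : ¬c) (h : Q (e hc)) : Q (dite c t e) := by
  rw [dif_neg hc]; exact h

lemma of_dite_pos {α : Sort*} {c : Prop} [Decidable c] {t : c → α} {e : ¬c → α}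
    (Q : α → Prop) (hc : c) (h : Q (dite c t e)) : Q (t hc) := by
  rw [dif_pos hc] at h; exact h

lemma of_dite_neg {α : Sort*} {c : Prop} [Decidable c] {t : c → α} {e : ¬c → α}
    (Q : α → Prop) (hc : ¬c) (h : Q (dite c t e)) : Q (e hc) := by
  rw [dif_neg hc] at h; exact h

/-- Twin-leaf reduction: if `a ≠ b` are leaves with the same unique neighbor
`c`, `{a, b}` is the terminal pair at index `i₀`, and `a, b` occur in no
other terminal pair, then deleting `a`, `b` and the pair `i₀` preserves the
answer to EDP. -/
theorem twin_leaf_reduction {V : Type*} (G : SimpleGraph V) {m : ℕ}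
    (P : Fin m → V × V) (a b c : V) (hab : a ≠ b)
    (hac : G.Adj a c) (hbc : G.Adj b c)
    (hNa : ∀ x, G.Adj a x → x = c) (hNb : ∀ x, G.Adj b x → x = c)
    (i₀ : Fin m) (hi₀ : P i₀ = (a, b) ∨ P i₀ = (b, a))
    (hocc : ∀ i, i ≠ i₀ →
      (P i).1 ≠ a ∧ (P i).1 ≠ b ∧ (P i).2 ≠ a ∧ (P i).2 ≠ b) :
    EDPYes G P ↔
      EDPYes (G.induce ({a, b}ᶜ))
        (fun i : {i : Fin m // i ≠ i₀} =>
          (⟨(P i.1).1, fun h => h.elim (hocc i.1 i.2).1 (hocc i.1 i.2).2.1⟩,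
           ⟨(P i.1).2,
             fun h => h.elim (hocc i.1 i.2).2.2.1 (hocc i.1 i.2).2.2.2⟩)) := by
  classical
  set emb := (SimpleGraph.Embedding.induce ({a, b}ᶜ : Set V) (G := G))
  constructor
  · rintro ⟨W, hWpath, hWdisj⟩
    have havoid : ∀ i : {i : Fin m // i ≠ i₀}, ∀ x ∈ (W i.1).support,
        x ∈ ({a, b}ᶜ : Set V) := by
      intro i x hx
      obtain ⟨h1, h2, h3, h4⟩ := hocc i.1 i.2
      have ha := avoid_leaf hNa (W i.1) (hWpath i.1) h1 h3
      have hb := avoid_leaf hNb (W i.1) (hWpath i.1) h2 h4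
      simp only [Set.mem_compl_iff, Set.mem_insert_iff, Set.mem_singleton_iff]
      push_neg
      exact ⟨fun h => ha (h ▸ hx), fun h => hb (h ▸ hx)⟩
    refine ⟨fun i => liftWalk (W i.1) (havoid i), ?_, ?_⟩
    · intro i
      exact SimpleGraph.Walk.IsPath.of_map (f := emb.toHom)
        (by rw [liftWalk_map]; exact hWpath i.1)
    · intro i j hij e he1 he2
      have h1 : Sym2.map emb.toHom e ∈ (W i.1).edges := by
        have hm : Sym2.map emb.toHom e ∈ ((liftWalk (W i.1) (havoid i)).map emb.toHom).edges := by
          rw [SimpleGraph.Walk.edges_map]; exact List.mem_map.mpr ⟨e, he1, rfl⟩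
        rwa [liftWalk_map] at hm
      have h2 : Sym2.map emb.toHom e ∈ (W j.1).edges := by
        have hm : Sym2.map emb.toHom e ∈ ((liftWalk (W j.1) (havoid j)).map emb.toHom).edges := by
          rw [SimpleGraph.Walk.edges_map]; exact List.mem_map.mpr ⟨e, he2, rfl⟩
        rwa [liftWalk_map] at hm
      exact hWdisj i.1 j.1 (fun h => hij (Subtype.ext h)) _ h1 h2
  · rintro ⟨W', hW'path, hW'disj⟩
    obtain ⟨W0, hW0path, hW0edges⟩ :
        ∃ W0 : G.Walk (P i₀).1 (P i₀).2, W0.IsPath ∧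
          ∀ e ∈ W0.edges, a ∈ e ∨ b ∈ e := by
      rcases hi₀ with h | h
      · refine ⟨(SimpleGraph.Walk.cons hac
            (SimpleGraph.Walk.cons hbc.symm SimpleGraph.Walk.nil)).copy
            (by rw [h]) (by rw [h]), ?_, ?_⟩
        · rw [SimpleGraph.Walk.isPath_copy]
          simp [SimpleGraph.Walk.isPath_def, hac.ne, hab, hbc.ne']
        · intro e he
          rw [SimpleGraph.Walk.edges_copy] at he
          simp only [SimpleGraph.Walk.edges_cons, SimpleGraph.Walk.edges_nil,
            List.mem_cons, List.not_mem_nil, or_false] at he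
          rcases he with rfl | rfl
          · exact Or.inl (Sym2.mem_mk_left a c)
          · exact Or.inr (Sym2.mem_mk_right c b)
      · refine ⟨(SimpleGraph.Walk.cons hbc
            (SimpleGraph.Walk.cons hac.symm SimpleGraph.Walk.nil)).copy
            (by rw [h]) (by rw [h]), ?_, ?_⟩
        · rw [SimpleGraph.Walk.isPath_copy]
          simp [SimpleGraph.Walk.isPath_def, hbc.ne, hab.symm, hac.ne']
        · intro e he
          rw [SimpleGraph.Walk.edges_copy] at he
          simp only [SimpleGraph.Walk.edges_cons, SimpleGraph.Walk.edges_nil,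
            List.mem_cons, List.not_mem_nil, or_false] at he
          rcases he with rfl | rfl
          · exact Or.inr (Sym2.mem_mk_left b c)
          · exact Or.inl (Sym2.mem_mk_right c a)
    have hnotab : ∀ (j : {i : Fin m // i ≠ i₀}) (e : Sym2 V),
        e ∈ ((W' j).map emb.toHom).edges → a ∉ e ∧ b ∉ e := by
      intro j e he
      rw [SimpleGraph.Walk.edges_map] at he
      obtain ⟨e', _, rfl⟩ := List.mem_map.mp he
      induction e' using Sym2.ind with
      | _ x y =>
        have hx := x.2
        have hy := y.2
        simp only [Set.mem_compl_iff, Set.mem_insert_iff,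
          Set.mem_singleton_iff, not_or] at hx hy
        constructor <;> intro hmem <;>
          rw [Sym2.map_pair_eq, Sym2.mem_iff] at hmem
        · rcases hmem with h | h
          · exact hx.1 h.symm
          · exact hy.1 h.symm
        · rcases hmem with h | h
          · exact hx.2 h.symm
          · exact hy.2 h.symm
    refine ⟨fun i => if h : i = i₀ then W0.copy (by rw [h]) (by rw [h])
      else (W' ⟨i, h⟩).map emb.toHom, ?_, ?_⟩
    · intro i
      by_cases h : i = i₀
      · refine dite_of_pos (fun p : G.Walk (P i).1 (P i).2 => p.IsPath) h ?_; beta_reduce; rw [SimpleGraph.Walk.isPath_copy]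
        exact hW0path
      · refine dite_of_neg (fun p : G.Walk (P i).1 (P i).2 => p.IsPath) h ?_; beta_reduce
        exact SimpleGraph.Walk.map_isPath_of_injective (f := emb.toHom) emb.injective (hW'path ⟨i, h⟩)
    · intro i j hij e he1 he2
      by_cases hi : i = i₀ <;> by_cases hj : j = i₀
      · exact hij (hi.trans hj.symm)
      · replace he1 := of_dite_pos (fun p : G.Walk (P i).1 (P i).2 => e ∈ p.edges) hi he1; beta_reduce at he1; rw [SimpleGraph.Walk.edges_copy] at he1
        replace he2 := of_dite_neg (fun p : G.Walk (P j).1 (P j).2 => e ∈ p.edges) hj he2; beta_reduce at he2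
        rcases hW0edges e he1 with h | h
        · exact (hnotab ⟨j, hj⟩ e he2).1 h
        · exact (hnotab ⟨j, hj⟩ e he2).2 h
      · replace he1 := of_dite_neg (fun p : G.Walk (P i).1 (P i).2 => e ∈ p.edges) hi he1; beta_reduce at he1
        replace he2 := of_dite_pos (fun p : G.Walk (P j).1 (P j).2 => e ∈ p.edges) hj he2; beta_reduce at he2; rw [SimpleGraph.Walk.edges_copy] at he2
        rcases hW0edges e he2 with h | h
        · exact (hnotab ⟨i, hi⟩ e he1).1 h
        · exact (hnotab ⟨i, hi⟩ e he1).2 h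
      · replace he1 := of_dite_neg (fun p : G.Walk (P i).1 (P i).2 => e ∈ p.edges) hi he1; beta_reduce at he1
        replace he2 := of_dite_neg (fun p : G.Walk (P j).1 (P j).2 => e ∈ p.edges) hj he2; beta_reduce at he2
        replace he1 := Eq.subst (motive := fun l => e ∈ l) (SimpleGraph.Walk.edges_map emb.toHom _) he1
        replace he2 := Eq.subst (motive := fun l => e ∈ l) (SimpleGraph.Walk.edges_map emb.toHom _) he2
        obtain ⟨e1, he1', heq1⟩ := List.mem_map.mp he1
        obtain ⟨e2, he2', heq2⟩ := List.mem_map.mp he2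
        have : e1 = e2 := Sym2.map.injective emb.injective (heq1.trans heq2.symm)
        exact hW'disj ⟨i, hi⟩ ⟨j, hj⟩ (fun h => hij (congrArg Subtype.val h))
          e1 he1' (this ▸ he2')
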